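/- Let k' ≥ 0, M_1 ~ Bin(k', 1/4), and Z ~ Geom(1/2) independent of M_1, and set C'_1 = max(Z + 1 − M_1, 0). Then E[C'_1] = 2(7/8)^{k'} and E[(C'_1)²] = 6(7/8)^{k'}. -/

import Mathlib

/-- The geometric pmf `Geom(1/2)` on ℕ: `P[Z = z] = 2^{-(z+1)}`. -/
noncomputable def geomHalf (z : ℕ) : ℝ := (1 / 2 : ℝ) ^ (z + 1)

/-- The binomial pmf `Bin(k', 1/4)`. -/
noncomputable def binQuarter (k' j : ℕ) : ℝ :=
  (Nat.choose k' j : ℝ) * (1 / 4) ^ j * (3 / 4) ^ (k' - j)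

lemma summable_aux (m p : ℕ) :
    Summable (fun z : ℕ => (1 / 2 : ℝ) ^ (z + 1) * ((z + 1 - m : ℕ) : ℝ) ^ p) := by
  have h : Summable (fun n : ℕ => (n : ℝ) ^ p * (1 / 2 : ℝ) ^ n) :=
    summable_pow_mul_geometric_of_norm_lt_one p (by norm_num [Real.norm_eq_abs, abs_of_pos])
  have h1 : Summable (fun z : ℕ => ((z + 1 : ℕ) : ℝ) ^ p * (1 / 2 : ℝ) ^ (z + 1)) := by
    have := (summable_nat_add_iff (f := fun n : ℕ => (n : ℝ) ^ p * (1 / 2 : ℝ) ^ n) 1).mpr h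
    simpa using this
  apply Summable.of_nonneg_of_le _ _ h1
  · intro z
    positivity
  · intro z
    rw [mul_comm]
    apply mul_le_mul_of_nonneg_right _ (by positivity)
    apply pow_le_pow_left₀ (by positivity)
    exact_mod_cast Nat.cast_le.mpr (Nat.sub_le _ _)

/-- Inner sum reduction: shift by `m`. -/
lemma innerSumShift (m p : ℕ) :
    ∑' z : ℕ, (1 / 2 : ℝ) ^ (z + 1) * ((z + 1 - m : ℕ) : ℝ) ^ (p + 1)
      = (1 / 2 : ℝ) ^ m * ∑' j : ℕ, (1 / 2 : ℝ) ^ (j + 1) * ((j + 1 : ℕ) : ℝ) ^ (p + 1) := by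
  have hs := summable_aux m (p + 1)
  rw [← Summable.sum_add_tsum_nat_add m hs]
  have h0 : ∑ z ∈ Finset.range m,
      (1 / 2 : ℝ) ^ (z + 1) * ((z + 1 - m : ℕ) : ℝ) ^ (p + 1) = 0 := by
    apply Finset.sum_eq_zero
    intro z hz
    rw [Finset.mem_range] at hz
    have hzm : z + 1 - m = 0 := by omega
    rw [hzm]
    simp
  rw [h0, zero_add, ← tsum_mul_left]
  congr 1
  funext j
  have hjm : j + m + 1 - m = j + 1 := by omega
  rw [hjm, pow_add, pow_add]
  ring

lemma base_sum_one : ∑' j : ℕ, (1 / 2 : ℝ) ^ (j + 1) * ((j + 1 : ℕ) : ℝ) ^ 1 = 2 := by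
  have h := hasSum_coe_mul_geometric_of_norm_lt_one (𝕜 := ℝ) (r := 1/2)
    (by norm_num [Real.norm_eq_abs, abs_of_pos])
  have h3 := (hasSum_nat_add_iff' (f := fun n : ℕ => (n : ℝ) * (1/2 : ℝ)^n) 1).mpr
    (by simpa using h)
  simp only [Finset.range_one, Finset.sum_singleton, Nat.cast_zero, zero_mul, pow_zero,
    sub_zero] at h3
  have h4 : (fun j : ℕ => (1 / 2 : ℝ) ^ (j + 1) * ((j + 1 : ℕ) : ℝ) ^ 1)
      = fun n : ℕ => ((n + 1 : ℕ) : ℝ) * (1/2 : ℝ) ^ (n + 1) := by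
    funext j; push_cast; ring
  rw [h4, h3.tsum_eq]
  norm_num

lemma base_sum_two : ∑' j : ℕ, (1 / 2 : ℝ) ^ (j + 1) * ((j + 1 : ℕ) : ℝ) ^ 2 = 6 := by
  have hr : ‖(1/2 : ℝ)‖ < 1 := by norm_num [Real.norm_eq_abs, abs_of_pos]
  have h2 := hasSum_choose_mul_geometric_of_norm_lt_one (𝕜 := ℝ) 2 hr
  have h1 := hasSum_choose_mul_geometric_of_norm_lt_one (𝕜 := ℝ) 1 hr
  have key : HasSum (fun n : ℕ => ((n + 1 : ℕ) : ℝ) ^ 2 * (1/2 : ℝ) ^ n)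
      (2 * (1 / (1 - 1/2 : ℝ)^3) - 1 / (1 - 1/2 : ℝ)^2) := by
    have h := (h2.mul_left 2).sub h1
    convert h using 2 with n
    · exact rfl
    have cnat : (n + 2).choose 2 * 2 = (n + 2) * (n + 1) := by
      have hd : 2 ∣ (n + 2) * (n + 2 - 1) := by
        have h' : n + 2 - 1 = n + 1 := by omega
        rw [h', mul_comm]
        exact (Nat.even_mul_succ_self (n + 1)).two_dvd
      rw [Nat.choose_two_right, Nat.div_mul_cancel hd]
      congr 1
    have c2 : ((n + 2).choose 2 : ℝ) * 2 = ((n : ℝ) + 2) * ((n : ℝ) + 1) := by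
      exact_mod_cast congrArg (Nat.cast (R := ℝ)) cnat
    have c2' : ((n + 2).choose 2 : ℝ) = ((n : ℝ) + 2) * ((n : ℝ) + 1) / 2 := by linarith
    rw [Nat.choose_one_right, c2']
    push_cast
    ring
  have key2 : HasSum (fun j : ℕ => (1 / 2 : ℝ) ^ (j + 1) * ((j + 1 : ℕ) : ℝ) ^ 2) 6 := by
    have h := key.mul_left (1/2 : ℝ)
    convert h using 2 with n
    · exact rfl
    · rw [pow_succ]; ring
    · norm_num
  exact key2.tsum_eq

lemma main_sum (k' p : ℕ) (c : ℝ)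
    (hbase : ∑' j : ℕ, (1 / 2 : ℝ) ^ (j + 1) * ((j + 1 : ℕ) : ℝ) ^ (p + 1) = c) :
    (∑' m : ℕ, ∑' z : ℕ, binQuarter k' m * geomHalf z * ((z + 1 - m : ℕ) : ℝ) ^ (p + 1))
      = c * (7 / 8 : ℝ) ^ k' := by
  have hinner : ∀ m : ℕ,
      (∑' z : ℕ, binQuarter k' m * geomHalf z * ((z + 1 - m : ℕ) : ℝ) ^ (p + 1))
        = binQuarter k' m * ((1 / 2 : ℝ) ^ m * c) := by
    intro m
    have : (fun z : ℕ => binQuarter k' m * geomHalf z * ((z + 1 - m : ℕ) : ℝ) ^ (p + 1))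
        = fun z : ℕ => binQuarter k' m *
            ((1 / 2 : ℝ) ^ (z + 1) * ((z + 1 - m : ℕ) : ℝ) ^ (p + 1)) := by
      funext z
      simp [geomHalf, mul_assoc]
    rw [this, tsum_mul_left, innerSumShift, hbase]
  simp only [hinner]
  rw [tsum_eq_sum (s := Finset.range (k' + 1)) (by
    intro m hm
    rw [Finset.mem_range] at hm
    have : Nat.choose k' m = 0 := Nat.choose_eq_zero_of_lt (by omega)
    simp [binQuarter, this])]
  have key : ∑ m ∈ Finset.range (k' + 1),
      binQuarter k' m * ((1 / 2 : ℝ) ^ m * c)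
      = c * ∑ m ∈ Finset.range (k' + 1),
          (1 / 8 : ℝ) ^ m * (3 / 4 : ℝ) ^ (k' - m) * (Nat.choose k' m : ℝ) := by
    rw [Finset.mul_sum]
    apply Finset.sum_congr rfl
    intro m _
    have h8 : (1 / 8 : ℝ) ^ m = (1 / 4 : ℝ) ^ m * (1 / 2 : ℝ) ^ m := by
      rw [← mul_pow]; norm_num
    rw [h8]
    simp only [binQuarter]
    ring
  rw [key, ← add_pow]
  norm_num

/-- with `M₁ ~ Bin(k',1/4)` and `Z ~ Geom(1/2)` independent, and
`C'₁ = max(Z + 1 - M₁, 0)`, one has `E[C'₁] = 2(7/8)^{k'}` and `E[(C'₁)²] = 6(7/8)^{k'}`. -/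
theorem geom_binomial_max_moments (k' : ℕ) :
    (∑' m : ℕ, ∑' z : ℕ, binQuarter k' m * geomHalf z * ((z + 1 - m : ℕ) : ℝ))
      = 2 * (7 / 8 : ℝ) ^ k' ∧
    (∑' m : ℕ, ∑' z : ℕ, binQuarter k' m * geomHalf z * ((z + 1 - m : ℕ) : ℝ) ^ 2)
      = 6 * (7 / 8 : ℝ) ^ k' := by
  constructor
  · have h := main_sum k' 0 2 (by simpa using base_sum_one)
    simpa using h
  · have h := main_sum k' 1 6 (by simpa using base_sum_two)
    simpa using h
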